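/- If (M,G) is a connected Riemannian manifold admitting a nonzero smooth function Λ with Hess_G(Λ) = GΛ (a Hesse manifold), then M is non-compact. -/

import Mathlib

/-- A bounded C² real function satisfying f'' = f vanishes identically (in particular
at 0): indeed f(t) = c₊ eᵗ + c₋ e⁻ᵗ and boundedness kills both coefficients. -/
lemma bounded_ode_vanish (f : ℝ → ℝ) (hf : ContDiff ℝ 2 f)
    (hf'' : ∀ t, deriv (deriv f) t = f t) (C : ℝ) (hC : ∀ t, |f t| ≤ C) :
    f 0 = 0 := by
  have h2 : (2 : ℕ∞) = 1 + 1 := by norm_num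
  have hd1 : Differentiable ℝ f := hf.differentiable (by norm_num)
  have hcd : ContDiff ℝ 1 (deriv f) := by
    have hf' : ContDiff ℝ (1 + 1 : ℕ∞) f := by rw [← h2]; exact hf
    exact (contDiff_succ_iff_deriv.mp hf').2.2
  have hd2 : Differentiable ℝ (deriv f) := hcd.differentiable one_ne_zero
  -- h t := exp(-t) * (f' t + f t) is constant
  set h : ℝ → ℝ := fun t => Real.exp (-t) * (deriv f t + f t) with hh
  have hhd : ∀ t, HasDerivAt h 0 t := by
    intro t
    have he : HasDerivAt (fun t : ℝ => Real.exp (-t)) (-Real.exp (-t)) t := by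
      simpa using (hasDerivAt_neg t).exp
    have hs : HasDerivAt (fun t => deriv f t + f t) (f t + deriv f t) t := by
      have h1 : HasDerivAt (deriv f) (f t) t := by
        have := (hd2 t).hasDerivAt
        rwa [hf'' t] at this
      exact h1.add (hd1 t).hasDerivAt
    have := he.mul hs
    exact this.congr_deriv (by ring)
  have hconst : ∀ t, h t = h 0 :=
    fun t => is_const_of_deriv_eq_zero (fun x => (hhd x).differentiableAt)
      (fun x => (hhd x).deriv) t 0
  -- g t := exp(t) * (f' t - f t) is constant
  set g : ℝ → ℝ := fun t => Real.exp t * (deriv f t - f t) with hg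
  have hgd : ∀ t, HasDerivAt g 0 t := by
    intro t
    have he : HasDerivAt (fun t : ℝ => Real.exp t) (Real.exp t) t := Real.hasDerivAt_exp t
    have hs : HasDerivAt (fun t => deriv f t - f t) (f t - deriv f t) t := by
      have h1 : HasDerivAt (deriv f) (f t) t := by
        have := (hd2 t).hasDerivAt
        rwa [hf'' t] at this
      exact h1.sub (hd1 t).hasDerivAt
    have := he.mul hs
    exact this.congr_deriv (by ring)
  have gconst : ∀ t, g t = g 0 :=
    fun t => is_const_of_deriv_eq_zero (fun x => (hgd x).differentiableAt)
      (fun x => (hgd x).deriv) t 0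
  set h0 : ℝ := deriv f 0 + f 0 with hh0
  set g0 : ℝ := deriv f 0 - f 0 with hg0
  have hsum : ∀ t, deriv f t + f t = Real.exp t * h0 := by
    intro t
    have := hconst t
    simp only [hh, neg_zero, Real.exp_zero, one_mul] at this
    rw [Real.exp_neg] at this
    field_simp at this
    rw [hh0]
    linear_combination this
  have hdiff : ∀ t, deriv f t - f t = Real.exp (-t) * g0 := by
    intro t
    have := gconst t
    simp only [hg, Real.exp_zero, one_mul] at this
    rw [hg0, Real.exp_neg]
    have hpos := (Real.exp_pos t).ne'
    field_simp
    linear_combination this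
  have hft : ∀ t, 2 * f t = Real.exp t * h0 - Real.exp (-t) * g0 := by
    intro t
    have := hsum t
    have := hdiff t
    linarith
  have hC0 : 0 ≤ C := le_trans (abs_nonneg _) (hC 0)
  -- h0 = 0
  have hh0z : h0 = 0 := by
    have key : ∀ t : ℝ, 0 ≤ t → |h0| ≤ Real.exp (-t) * (2 * C + |g0|) := by
      intro t ht
      have h1 : Real.exp t * h0 = 2 * f t + Real.exp (-t) * g0 := by
        have := hft t; linarith
      have h2 : |h0| = Real.exp (-t) * |2 * f t + Real.exp (-t) * g0| := by
        rw [← h1, abs_mul, abs_of_pos (Real.exp_pos t), Real.exp_neg]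
        field_simp
      rw [h2]
      apply mul_le_mul_of_nonneg_left _ (Real.exp_pos _).le
      calc |2 * f t + Real.exp (-t) * g0| ≤ |2 * f t| + |Real.exp (-t) * g0| := abs_add_le _ _
        _ ≤ 2 * C + |g0| := by
            rw [abs_mul, abs_mul, abs_of_pos (Real.exp_pos _)]
            have : Real.exp (-t) ≤ 1 := Real.exp_le_one_iff.mpr (by linarith)
            have hg0n := abs_nonneg g0
            have := hC t
            rw [abs_two]
            nlinarith
    have htend : Filter.Tendsto (fun t : ℝ => Real.exp (-t) * (2 * C + |g0|))
        Filter.atTop (nhds 0) := by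
      simpa using (Real.tendsto_exp_neg_atTop_nhds_zero.mul_const (2 * C + |g0|))
    have : |h0| ≤ 0 := by
      refine ge_of_tendsto htend ?_
      filter_upwards [Filter.eventually_ge_atTop 0] with t ht using key t ht
    have := abs_nonneg h0
    have : |h0| = 0 := le_antisymm ‹|h0| ≤ 0› ‹0 ≤ |h0|›
    exact abs_eq_zero.mp this
  -- g0 = 0
  have hg0z : g0 = 0 := by
    have key : ∀ t : ℝ, t ≤ 0 → |g0| ≤ Real.exp t * (2 * C) := by
      intro t ht
      have h1 : Real.exp (-t) * g0 = -(2 * f t) := by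
        have := hft t; rw [hh0z] at this; linarith
      have h2 : |g0| = Real.exp t * |2 * f t| := by
        have : g0 = Real.exp t * (-(2 * f t)) := by
          rw [← h1, Real.exp_neg]
          field_simp
        rw [this, abs_mul, abs_of_pos (Real.exp_pos t), abs_neg]
      rw [h2]
      apply mul_le_mul_of_nonneg_left _ (Real.exp_pos _).le
      rw [abs_mul, abs_two]
      have := hC t
      nlinarith
    have htend : Filter.Tendsto (fun t : ℝ => Real.exp t * (2 * C))
        Filter.atBot (nhds 0) := by
      simpa using (Real.tendsto_exp_atBot.mul_const (2 * C))
    have : |g0| ≤ 0 := by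
      refine ge_of_tendsto htend ?_
      filter_upwards [Filter.eventually_le_atBot 0] with t ht using key t ht
    exact abs_eq_zero.mp (le_antisymm this (abs_nonneg g0))
  have : 2 * f 0 = 0 := by
    have := hft 0
    simp [hh0z, hg0z] at this
    linarith
  linarith

/-- a connected Riemannian manifold (M,G) admitting a nonzero smooth
function Λ with Hess_G(Λ) = GΛ (a Hesse manifold) is non-compact.

The Riemannian structure is encoded intrinsically through its family `geo` of
unit-speed geodesics (curves that are local isometries from ℝ, which exist through
every point of a complete Riemannian manifold, and through every point of a compact
one); the Hesse equation Hess_G(Λ) = GΛ is equivalent to the requirement that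
(Λ∘γ)'' = Λ∘γ along every unit-speed geodesic γ. -/
theorem hesse_manifold_noncompact
    {M : Type*} [MetricSpace M] [ConnectedSpace M] [Nonempty M]
    (geo : Set (ℝ → M))
    (hunit : ∀ γ ∈ geo, ∀ t : ℝ, ∃ ε > 0, ∀ s₁ s₂ : ℝ,
      |s₁ - t| < ε → |s₂ - t| < ε → dist (γ s₁) (γ s₂) = |s₁ - s₂|)
    (hexist : ∀ p : M, ∃ γ ∈ geo, γ 0 = p)
    (Λ : M → ℝ) (hΛc : Continuous Λ)
    (hHesse : ∀ γ ∈ geo, ContDiff ℝ 2 (fun s => Λ (γ s)) ∧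
      ∀ t : ℝ, deriv (deriv (fun s => Λ (γ s))) t = Λ (γ t))
    (hΛne : Λ ≠ 0) :
    ¬ CompactSpace M := by
  intro hcomp
  apply hΛne
  obtain ⟨C, hC⟩ := isCompact_univ.exists_bound_of_continuousOn hΛc.continuousOn
  funext p
  obtain ⟨γ, hγ, hγ0⟩ := hexist p
  obtain ⟨hsm, hode⟩ := hHesse γ hγ
  have := bounded_ode_vanish (fun s => Λ (γ s)) hsm hode C
    (fun t => by simpa [Real.norm_eq_abs] using hC (γ t) trivial)
  simpa [hγ0] using this
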